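/- A cyclic code C ⊆ (F_{q^r})^n is Galois supplemented if and only if C + (F_q)^n = (F_{q^r})^n, where (F_q)^n is the set of vectors all of whose coordinates lie in the subfield F_q. -/

import Mathlib

open Polynomial

/-- The polynomial of degree `< n` whose coefficient vector is the word `u`. -/
noncomputable def wordPoly {F : Type*} [Field F] {n : ℕ} (u : Fin n → F) : Polynomial F :=
  ∑ j : Fin n, Polynomial.C (u j) * Polynomial.X ^ (j : ℕ)

/-- `C ⊆ (F_{q^r})^n` is Galois supplemented: `C + C^τ = (F_{q^r})^n` for every non-trivial
`τ ∈ Gal(F_{q^r}/F_q)`; the non-trivial automorphisms are `x ↦ x^(q^i)`, `1 ≤ i < r`. -/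
def GaloisSupplemented {F : Type*} [Field F] {n : ℕ} (q r : ℕ) (C : Set (Fin n → F)) : Prop :=
  ∀ i : ℕ, 0 < i → i < r → ∀ v : Fin n → F,
    ∃ a ∈ C, ∃ b ∈ C, v = a + fun j => (b j) ^ (q ^ i)

section aux

variable {F : Type*} [Field F] {n : ℕ}

lemma wordPoly_coeff (u : Fin n → F) (m : ℕ) :
    (wordPoly u).coeff m = if h : m < n then u ⟨m, h⟩ else 0 := by
  rw [wordPoly, Polynomial.finset_sum_coeff]
  simp only [Polynomial.coeff_C_mul, Polynomial.coeff_X_pow, mul_ite, mul_one, mul_zero]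
  split_ifs with h
  · rw [Finset.sum_eq_single (⟨m, h⟩ : Fin n)]
    · simp
    · intro j _ hj
      simp only [ite_eq_right_iff]
      intro he
      exact absurd (Fin.ext he.symm) hj
    · simp
  · apply Finset.sum_eq_zero
    intro j _
    simp only [ite_eq_right_iff]
    intro he
    exact absurd (he ▸ j.isLt) h

lemma degree_wordPoly_lt (u : Fin n → F) : (wordPoly u).degree < n := by
  rw [Polynomial.degree_lt_iff_coeff_zero]
  intro m hm
  rw [wordPoly_coeff]
  rw [dif_neg]
  exact fun h => absurd hm (by exact_mod_cast not_le.mpr h)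

lemma wordPoly_ofCoeff (p : F[X]) (h : p.degree < n) :
    wordPoly (fun j : Fin n => p.coeff j) = p := by
  ext m
  rw [wordPoly_coeff]
  split_ifs with hm
  · rfl
  · exact (Polynomial.coeff_eq_zero_of_degree_lt
      (lt_of_lt_of_le h (by exact_mod_cast not_lt.mp hm))).symm

lemma wordPoly_add (u v : Fin n → F) : wordPoly (u + v) = wordPoly u + wordPoly v := by
  simp [wordPoly, map_add, add_mul, Finset.sum_add_distrib]

lemma wordPoly_map (ρ : F →+* F) (u : Fin n → F) :
    (wordPoly u).map ρ = wordPoly (fun j => ρ (u j)) := by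
  simp [wordPoly, Polynomial.map_sum]

lemma wordPoly_sub_poly (v : Fin n → F) (B : F[X]) (hB : B.degree < n) :
    wordPoly (fun j : Fin n => v j - B.coeff j) = wordPoly v - B := by
  conv_rhs => rw [← wordPoly_ofCoeff B hB]
  ext m
  simp [wordPoly_coeff]
  split <;> simp

lemma wordPoly_single (hn : 0 < n) (c : F) :
    wordPoly (fun j : Fin n => if j = ⟨0, hn⟩ then c else 0) = C c := by
  ext m
  rw [wordPoly_coeff, Polynomial.coeff_C]
  by_cases hm : m = 0
  · subst hm
    rw [dif_pos hn, if_pos rfl, if_pos rfl]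
  · rw [if_neg hm]
    split_ifs with h1 h2
    · exact absurd (by simpa [Fin.ext_iff] using h2) hm
    · rfl
    · rfl

lemma monic_M (hn : 0 < n) : (X ^ n - 1 : F[X]).Monic := by
  have := Polynomial.monic_X_pow_sub_C (1 : F) hn.ne'
  simpa using this

lemma degree_M (hn : 0 < n) : (X ^ n - 1 : F[X]).degree = n := by
  have := Polynomial.degree_X_pow_sub_C hn (1 : F)
  simpa using this

lemma map_M (ρ : F →+* F) : (X ^ n - 1 : F[X]).map ρ = X ^ n - 1 := by
  simp

lemma aeval_zero_of_dvd {A : Type*} [CommRing A] [Algebra F A] {g W : F[X]}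
    (h : g ∣ W) {γ : A} (hγ : aeval γ g = 0) : aeval γ W = 0 := by
  obtain ⟨t, ht⟩ := h
  rw [ht, map_mul, hγ, zero_mul]

lemma pow_q_pow_fix {q : ℕ} {x : F} (h : x ^ q = x) (i : ℕ) : x ^ q ^ i = x := by
  induction i with
  | zero => simp
  | succ i ih => rw [pow_succ, pow_mul, ih, h]

/-- decomposition from coprimality -/
lemma decomp_of_coprime (hn : 0 < n) (g : F[X]) (hdvd : g ∣ X ^ n - 1)
    (ρ : F →+* F) (ρi : F → F) (hρi : ∀ x, ρ (ρi x) = x)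
    (hcop : IsCoprime g (g.map ρ)) (v : Fin n → F) :
    ∃ a : Fin n → F, g ∣ wordPoly a ∧ ∃ b : Fin n → F, g ∣ wordPoly b ∧
      v = a + fun j => ρ (b j) := by
  obtain ⟨u, w, huw⟩ := hcop
  set M : F[X] := X ^ n - 1 with hM
  have hMg : g.map ρ ∣ M := by
    have := Polynomial.map_dvd ρ hdvd
    rwa [map_M] at this
  set B : F[X] := (wordPoly v * w * g.map ρ) %ₘ M with hB
  have hBd : g.map ρ ∣ B := by
    rw [hB, Polynomial.modByMonic_eq_sub_mul_div _ _]
    exact dvd_sub (Dvd.dvd.mul_left dvd_rfl _) (hMg.mul_right _)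
  have hBdeg : B.degree < n := by
    rw [← degree_M (F := F) hn]
    exact Polynomial.degree_modByMonic_lt _ (monic_M hn)
  refine ⟨fun j => v j - B.coeff j, ?_, fun j : Fin n => ρi (B.coeff j), ?_, ?_⟩
  · rw [wordPoly_sub_poly v B hBdeg]
    have h2 : wordPoly v - B
        = wordPoly v * u * g + M * (wordPoly v * w * g.map ρ /ₘ M) := by
      rw [hB, Polynomial.modByMonic_eq_sub_mul_div _ _]
      linear_combination (-(wordPoly v)) * huw
    rw [h2]
    exact dvd_add (dvd_mul_left g _) (hdvd.mul_right _)
  · have hmap : (wordPoly (fun j : Fin n => ρi (B.coeff j))).map ρ = B := by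
      rw [wordPoly_map]
      simp only [hρi]
      exact wordPoly_ofCoeff B hBdeg
    have hρbij : Function.Bijective ρ := ⟨ρ.injective, fun x => ⟨ρi x, hρi x⟩⟩
    set e : F ≃+* F := RingEquiv.ofBijective ρ hρbij with he
    have hcomp : (e.symm : F →+* F).comp ρ = RingHom.id F := by
      ext x
      exact e.symm_apply_apply x
    have := Polynomial.map_dvd (e.symm : F →+* F) (hmap ▸ hBd)
    rwa [Polynomial.map_map, Polynomial.map_map, hcomp, Polynomial.map_id,
      Polynomial.map_id] at this
  · funext j
    simp [hρi]

end aux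

lemma aeval_map_frob {F : Type*} [Field F] (p m : ℕ) [Fact p.Prime] [CharP F p]
    (W : Polynomial F) (β : AlgebraicClosure F) :
    aeval (β ^ p ^ m) (W.map (iterateFrobenius F p m)) = (aeval β W) ^ p ^ m := by
  haveI : ExpChar F p := ExpChar.prime Fact.out
  haveI : CharP (AlgebraicClosure F) p :=
    charP_of_injective_algebraMap (algebraMap F (AlgebraicClosure F)).injective p
  haveI : ExpChar (AlgebraicClosure F) p := ExpChar.prime Fact.out
  have h2 : (algebraMap F (AlgebraicClosure F)).comp (iterateFrobenius F p m)
      = (iterateFrobenius (AlgebraicClosure F) p m).comp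
          (algebraMap F (AlgebraicClosure F)) := by
    ext x
    simp [iterateFrobenius_def, map_pow]
  rw [aeval_def, eval₂_map, h2]
  have h3 : β ^ p ^ m = iterateFrobenius (AlgebraicClosure F) p m β := rfl
  rw [h3, ← Polynomial.hom_eval₂, ← aeval_def, iterateFrobenius_def]

lemma exists_common_root {F : Type*} [Field F] (p m : ℕ) [Fact p.Prime] [CharP F p]
    (g : Polynomial F)
    (h : ¬ IsCoprime g (g.map (iterateFrobenius F p m))) :
    ∃ β : AlgebraicClosure F, (aeval β g = 0) ∧ aeval (β ^ p ^ m) g = 0 := by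
  haveI : ExpChar F p := ExpChar.prime Fact.out
  classical
  set φ := iterateFrobenius F p m
  set d := EuclideanDomain.gcd g (g.map φ) with hd
  have hdu : ¬ IsUnit d := fun hu => h (EuclideanDomain.gcd_isUnit_iff.mp hu)
  have hddeg : d.degree ≠ 0 := fun h0 => hdu (Polynomial.isUnit_iff_degree_eq_zero.mpr h0)
  obtain ⟨α, hα⟩ := IsAlgClosed.exists_aeval_eq_zero (AlgebraicClosure F) d hddeg
  have hαg : aeval α g = 0 := aeval_zero_of_dvd (EuclideanDomain.gcd_dvd_left _ _) hα
  have hαg2 : aeval α (g.map φ) = 0 :=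
    aeval_zero_of_dvd (EuclideanDomain.gcd_dvd_right _ _) hα
  have hpm : (0:ℕ) < p ^ m := pow_pos (Fact.out : p.Prime).pos m
  obtain ⟨β, hβ⟩ := IsAlgClosed.exists_root (X ^ p ^ m - C α)
    (by rw [Polynomial.degree_X_pow_sub_C hpm]; exact_mod_cast hpm.ne')
  have hβα : β ^ p ^ m = α := by
    have := hβ
    rw [Polynomial.IsRoot, Polynomial.eval_sub, Polynomial.eval_pow, Polynomial.eval_X,
      Polynomial.eval_C, sub_eq_zero] at this
    exact this
  refine ⟨β, ?_, by rw [hβα]; exact hαg⟩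
  have := aeval_map_frob p m g β
  rw [hβα, hαg2] at this
  exact (pow_eq_zero_iff hpm.ne').mp this.symm

theorem stmt3 (q r n : ℕ) (hq : IsPrimePow q) (hr : 1 < r) (hn : 0 < n)
    (hcop : Nat.Coprime n q)
    (F : Type*) [Field F] [Fintype F] (hF : Fintype.card F = q ^ r)
    (g : Polynomial F) (hmonic : g.Monic) (hdvd : g ∣ (Polynomial.X ^ n - 1)) :
    GaloisSupplemented q r {u : Fin n → F | g ∣ wordPoly u} ↔
      ∀ v : Fin n → F, ∃ a : Fin n → F, g ∣ wordPoly a ∧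
        ∃ b : Fin n → F, (∀ j, (b j) ^ q = b j) ∧ v = a + b := by
  classical
  have hq1 : 1 < q := hq.one_lt
  obtain ⟨p, k, hpp, hk, hpk⟩ := hq
  haveI hfp : Fact p.Prime := ⟨Nat.prime_iff.mpr hpp⟩
  -- characteristic
  obtain ⟨p', hp'⟩ := CharP.exists F
  haveI : CharP F p' := hp'
  obtain ⟨m0, hp'p, hcard⟩ := FiniteField.card F p'
  have hpp' : p = p' := by
    have h1 : p ∣ p' ^ (m0 : ℕ) := by
      rw [← hcard, hF, ← hpk]
      exact dvd_pow (dvd_pow_self p hk.ne') (by omega : r ≠ 0)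
    exact (Nat.prime_dvd_prime_iff_eq (Nat.prime_iff.mpr hpp) hp'p).mp
      ((Nat.prime_iff.mpr hpp).dvd_of_dvd_pow h1)
  haveI : CharP F p := hpp' ▸ hp'
  haveI : ExpChar F p := ExpChar.prime Fact.out
  have hqi : ∀ i : ℕ, q ^ i = p ^ (k * i) := by
    intro i
    rw [← hpk, ← pow_mul]
  have hqr : ∀ x : F, x ^ q ^ r = x := by
    intro x
    rw [← hF]
    exact FiniteField.pow_card x
  have hφkr : iterateFrobenius F p (k * r) = RingHom.id F := by
    ext x
    rw [iterateFrobenius_def, ← hqi, hqr, RingHom.id_apply]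
  -- Block 1: GS → coprimality
  have hGS_to_cop : GaloisSupplemented q r {u : Fin n → F | g ∣ wordPoly u} →
      ∀ i, 0 < i → i < r → IsCoprime g (g.map (iterateFrobenius F p (k * i))) := by
    intro hGS i hi0 hir
    by_contra hnc
    obtain ⟨β, hβ1, hβ2⟩ := exists_common_root p (k * i) g hnc
    obtain ⟨a, ha, b, hb, hab⟩ := hGS i hi0 hir (fun j => if j = ⟨0, hn⟩ then 1 else 0)
    have hsum : (C (1:F) : Polynomial F) = wordPoly a + wordPoly (fun j => (b j) ^ q ^ i) := by
      rw [← wordPoly_single hn (1:F), hab, wordPoly_add]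
    have hmapb : wordPoly (fun j : Fin n => (b j) ^ q ^ i)
        = (wordPoly b).map (iterateFrobenius F p (k * i)) := by
      rw [wordPoly_map]
      congr 1
      funext j
      rw [iterateFrobenius_def, hqi]
    have := congrArg (aeval (β ^ p ^ (k * i))) hsum
    rw [map_add, hmapb, aeval_map_frob, aeval_zero_of_dvd ha hβ2,
      aeval_zero_of_dvd hb hβ1, aeval_C, map_one,
      zero_pow (pow_pos hfp.out.pos _).ne'] at this
    simpa using this
  -- Block 3: B' → coprimality
  have hB_to_cop : (∀ v : Fin n → F, ∃ a : Fin n → F, g ∣ wordPoly a ∧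
      ∃ b : Fin n → F, (∀ j, (b j) ^ q = b j) ∧ v = a + b) →
      ∀ i, 0 < i → i < r → IsCoprime g (g.map (iterateFrobenius F p (k * i))) := by
    intro hB i hi0 hir
    by_contra hnc
    obtain ⟨β, hβ1, hβ2⟩ := exists_common_root p (k * i) g hnc
    have key : ∀ c : F, c ^ q ^ i = c := by
      intro c
      obtain ⟨a, ha, b, hb, hab⟩ := hB (fun j => if j = ⟨0, hn⟩ then c else 0)
      have hsum : (C c : Polynomial F) = wordPoly a + wordPoly b := by
        rw [← wordPoly_single hn c, hab, wordPoly_add]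
      have hbinv : (wordPoly b).map (iterateFrobenius F p (k * i)) = wordPoly b := by
        rw [wordPoly_map]
        congr 1
        funext j
        rw [iterateFrobenius_def, ← hqi]
        exact pow_q_pow_fix (hb j) i
      have h1 := congrArg (aeval β) hsum
      have h2 := congrArg (aeval (β ^ p ^ (k * i))) hsum
      rw [map_add, aeval_zero_of_dvd ha hβ1, zero_add, aeval_C] at h1
      rw [map_add, aeval_zero_of_dvd ha hβ2, zero_add, aeval_C] at h2
      have h3 := aeval_map_frob p (k * i) (wordPoly b) β
      rw [hbinv, ← h1, ← h2] at h3
      -- h3 : algebraMap c = (algebraMap c) ^ p ^ (k*i)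
      have h4 : algebraMap F (AlgebraicClosure F) (c ^ q ^ i)
          = algebraMap F (AlgebraicClosure F) c := by
        rw [map_pow, hqi, ← h3]
      exact (algebraMap F (AlgebraicClosure F)).injective h4
    -- counting contradiction
    have hqi1 : 1 < q ^ i := Nat.one_lt_pow hi0.ne' hq1
    have hne : (X ^ q ^ i - X : Polynomial F) ≠ 0 := by
      intro h0
      rw [sub_eq_zero] at h0
      have := congrArg natDegree h0
      rw [natDegree_X_pow, natDegree_X] at this
      omega
    have hsub : (Finset.univ : Finset F) ⊆ (X ^ q ^ i - X : Polynomial F).roots.toFinset := by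
      intro c _
      rw [Multiset.mem_toFinset, Polynomial.mem_roots hne]
      simp only [Polynomial.IsRoot, Polynomial.eval_sub, Polynomial.eval_pow,
        Polynomial.eval_X, key c, sub_self]
    have hle : Fintype.card F ≤ q ^ i := by
      calc Fintype.card F = (Finset.univ : Finset F).card := rfl
        _ ≤ (X ^ q ^ i - X : Polynomial F).roots.toFinset.card := Finset.card_le_card hsub
        _ ≤ Multiset.card (X ^ q ^ i - X : Polynomial F).roots := Multiset.toFinset_card_le _
        _ ≤ (X ^ q ^ i - X : Polynomial F).natDegree := Polynomial.card_roots' _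
        _ ≤ q ^ i := by
            refine le_trans (Polynomial.natDegree_sub_le _ _) ?_
            simp only [Polynomial.natDegree_X_pow, Polynomial.natDegree_X]
            omega
    have hlt : q ^ i < q ^ r := Nat.pow_lt_pow_right hq1 hir
    rw [hF] at hle
    omega
  -- Block 2: coprimality → B'
  have hcop_to_B : (∀ i, 0 < i → i < r →
      IsCoprime g (g.map (iterateFrobenius F p (k * i)))) →
      ∀ v : Fin n → F, ∃ a : Fin n → F, g ∣ wordPoly a ∧
        ∃ b : Fin n → F, (∀ j, (b j) ^ q = b j) ∧ v = a + b := by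
    intro hc v
    have hH : IsCoprime g (∏ j ∈ Finset.Ioo 0 r,
        g.map (iterateFrobenius F p (k * j))) :=
      IsCoprime.prod_right fun j hj =>
        hc j (Finset.mem_Ioo.mp hj).1 (Finset.mem_Ioo.mp hj).2
    obtain ⟨u, w, huw⟩ := hH
    set W : Polynomial F := wordPoly v with hW
    set H : Polynomial F := ∏ j ∈ Finset.Ioo 0 r,
      g.map (iterateFrobenius F p (k * j)) with hH'
    set b0 : Polynomial F := W * w * H with hb0
    set b1 : Polynomial F := ∑ j ∈ Finset.range r, b0.map (iterateFrobenius F p (k * j))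
      with hb1
    have herase : (Finset.range r).erase 0 = Finset.Ioo 0 r := by
      ext x
      simp only [Finset.mem_erase, Finset.mem_range, Finset.mem_Ioo]
      omega
    have hmap0 : b0.map (iterateFrobenius F p (k * 0)) = b0 := by
      rw [mul_zero, iterateFrobenius_zero, Polynomial.map_id]
    have h0mem : (0:ℕ) ∈ Finset.range r := Finset.mem_range.mpr (by omega)
    have hsplit : b1 = b0 + ∑ j ∈ Finset.Ioo 0 r,
        b0.map (iterateFrobenius F p (k * j)) := by
      rw [hb1, ← Finset.add_sum_erase _ _ h0mem, herase, hmap0]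
    have hgb0term : ∀ j ∈ Finset.Ioo 0 r, g ∣ b0.map (iterateFrobenius F p (k * j)) := by
      intro j hj
      obtain ⟨hj0, hjr⟩ := Finset.mem_Ioo.mp hj
      have h1 : g.map (iterateFrobenius F p (k * (r - j))) ∣ H :=
        Finset.dvd_prod_of_mem _ (Finset.mem_Ioo.mpr ⟨by omega, by omega⟩)
      have h2 : (g.map (iterateFrobenius F p (k * (r - j)))).map
          (iterateFrobenius F p (k * j)) = g := by
        rw [Polynomial.map_map, ← iterateFrobenius_add]
        have : k * j + k * (r - j) = k * r := by
          rw [← Nat.mul_add, Nat.add_sub_cancel' hjr.le]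
        rw [this, hφkr, Polynomial.map_id]
      have h3 : H ∣ b0 := dvd_mul_left H (W * w)
      calc g = (g.map (iterateFrobenius F p (k * (r - j)))).map
            (iterateFrobenius F p (k * j)) := h2.symm
        _ ∣ H.map (iterateFrobenius F p (k * j)) := Polynomial.map_dvd _ h1
        _ ∣ b0.map (iterateFrobenius F p (k * j)) := Polynomial.map_dvd _ h3
    have hgWb1 : g ∣ W - b1 := by
      rw [hsplit]
      have e1 : W - (b0 + ∑ j ∈ Finset.Ioo 0 r,
          b0.map (iterateFrobenius F p (k * j)))
          = (W * u * g) - ∑ j ∈ Finset.Ioo 0 r,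
            b0.map (iterateFrobenius F p (k * j)) := by
        rw [hb0]
        linear_combination (-W) * huw
      rw [e1]
      exact dvd_sub (dvd_mul_left g _) (Finset.dvd_sum hgb0term)
    have hb1inv : b1.map (iterateFrobenius F p k) = b1 := by
      rw [hb1, Polynomial.map_sum]
      have hterm : ∀ j : ℕ, (b0.map (iterateFrobenius F p (k * j))).map
          (iterateFrobenius F p k) = b0.map (iterateFrobenius F p (k * (j + 1))) := by
        intro j
        rw [Polynomial.map_map, ← iterateFrobenius_add]
        congr 2
        ring
      simp_rw [hterm]
      have e1 := Finset.sum_range_succ' (fun j => b0.map (iterateFrobenius F p (k * j))) r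
      have e2 := Finset.sum_range_succ (fun j => b0.map (iterateFrobenius F p (k * j))) r
      have e3 : b0.map (iterateFrobenius F p (k * r)) = b0 := by
        rw [hφkr, Polynomial.map_id]
      rw [e2, e3, hmap0] at e1
      linear_combination -e1
    -- truncate
    set M : Polynomial F := X ^ n - 1 with hM
    set b2 : Polynomial F := b1 %ₘ M with hb2
    have hb2eq : b2 = b1 - M * (b1 /ₘ M) :=
      Polynomial.modByMonic_eq_sub_mul_div _ _
    have hb2deg : b2.degree < n := by
      rw [← degree_M (F := F) hn]
      exact Polynomial.degree_modByMonic_lt _ (monic_M hn)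
    have hb2inv : b2.map (iterateFrobenius F p k) = b2 := by
      have hdiff : M ∣ b2.map (iterateFrobenius F p k) - b2 := by
        have : b2.map (iterateFrobenius F p k) - b2
            = M * ((b1 /ₘ M) - (b1 /ₘ M).map (iterateFrobenius F p k)) := by
          rw [hb2eq]
          rw [Polynomial.map_sub, Polynomial.map_mul, hb1inv]
          have : (M : Polynomial F).map (iterateFrobenius F p k) = M := map_M _
          rw [this]
          ring
        rw [this]
        exact dvd_mul_right _ _
      have hdeg : (b2.map (iterateFrobenius F p k) - b2).degree < M.degree := by
        rw [degree_M (F := F) hn]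
        refine lt_of_le_of_lt (Polynomial.degree_sub_le _ _) (max_lt ?_ hb2deg)
        exact lt_of_le_of_lt (Polynomial.degree_map_le) hb2deg
      have := Polynomial.eq_zero_of_dvd_of_degree_lt hdiff hdeg
      linear_combination this
    have hcoef : ∀ j : ℕ, (b2.coeff j) ^ q = b2.coeff j := by
      intro j
      have := congrArg (fun t => Polynomial.coeff t j) hb2inv
      simp only [Polynomial.coeff_map] at this
      rw [iterateFrobenius_def] at this
      rw [← hpk]
      exact this
    have hgW2 : g ∣ W - b2 := by
      have : W - b2 = (W - b1) + M * (b1 /ₘ M) := by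
        rw [hb2eq]; ring
      rw [this]
      exact dvd_add hgWb1 (hdvd.mul_right _)
    refine ⟨fun j => v j - b2.coeff j, ?_, fun j : Fin n => b2.coeff j, fun j => hcoef j, ?_⟩
    · rw [wordPoly_sub_poly v b2 hb2deg]
      exact hgW2
    · funext j
      simp
  constructor
  · intro hGS v
    exact hcop_to_B (hGS_to_cop hGS) v
  · intro hB
    intro i hi0 hir v
    have cop := hB_to_cop hB i hi0 hir
    have hinv : ∀ x : F, iterateFrobenius F p (k * i) (x ^ q ^ (r - i)) = x := by
      intro x
      rw [iterateFrobenius_def, ← hqi, ← pow_mul, ← pow_add]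
      have hri : r - i + i = r := by omega
      rw [hri]
      exact hqr x
    obtain ⟨a, ha, b, hb, hab⟩ := decomp_of_coprime hn g hdvd
      (iterateFrobenius F p (k * i)) (fun x => x ^ q ^ (r - i)) hinv cop v
    refine ⟨a, ha, b, hb, ?_⟩
    rw [hab]
    funext j
    simp only [Pi.add_apply]
    congr 1
    rw [iterateFrobenius_def, hqi]
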